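/- Let H_n denote the height of a binary search tree built by inserting a uniformly random permutation of n distinct keys. Then for every real k > 2, ℙ(H_n ≥ k·ln n) ≤ (1/n)·(2e/k)^{k·ln n}. -/

import Mathlib

/-- Binary trees with natural-number keys. -/
inductive BTree where
  | leaf : BTree
  | node : BTree → ℕ → BTree → BTree

/-- Number of nodes on the longest root-to-leaf path (so a single node has height 1). -/
def BTree.height : BTree → ℕ
  | .leaf => 0
  | .node l _ r => max l.height r.height + 1

/-- Standard BST insertion. -/
def BTree.insert (x : ℕ) : BTree → BTree
  | .leaf => .node .leaf x .leaf
  | .node l a r => if x < a then .node (l.insert x) a r else .node l a (r.insert x)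

/-- Build a BST by inserting the keys `π 0, π 1, …, π (n-1)` in this order. -/
def buildBST (n : ℕ) (π : Equiv.Perm (Fin n)) : BTree :=
  (List.finRange n).foldl (fun T i => T.insert (π i).val) .leaf

set_option maxHeartbeats 1600000

namespace Dev17


noncomputable def W (c : ℝ) : BTree → ℝ
  | .leaf => 0
  | .node l _ r => 1 + c * (W c l + W c r)

lemma W_nonneg {c : ℝ} (hc : 0 ≤ c) : ∀ T, 0 ≤ W c T
  | .leaf => le_refl 0
  | .node l _ r => by
      have hl := W_nonneg hc l; have hr := W_nonneg hc r
      have := mul_nonneg hc (add_nonneg hl hr)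
      simp only [W]; linarith

lemma pow_height_le_W {c : ℝ} (hc : 1 ≤ c) :
    ∀ T : BTree, 1 ≤ T.height → (c : ℝ) ^ (T.height - 1) ≤ W c T
  | .node l a r, _ => by
      have hc0 : (0:ℝ) ≤ c := by linarith
      have hl := W_nonneg hc0 l
      have hr := W_nonneg hc0 r
      simp only [BTree.height, W, Nat.add_sub_cancel]
      rcases Nat.eq_zero_or_pos (max l.height r.height) with h0 | hpos
      · rw [h0]
        have := mul_nonneg hc0 (add_nonneg hl hr)
        simp; linarith
      · rcases le_total r.height l.height with hle | hle
        · rw [max_eq_left hle] at hpos ⊢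
          have ih := pow_height_le_W hc l hpos
          have h1 : c ^ l.height = c ^ (l.height - 1) * c := by
            rw [← pow_succ, Nat.sub_add_cancel hpos]
          rw [h1]
          have h2 : c ^ (l.height - 1) * c ≤ W c l * c :=
            mul_le_mul_of_nonneg_right ih hc0
          have h3 : c * W c r ≥ 0 := mul_nonneg hc0 hr
          nlinarith [mul_nonneg hc0 hl]
        · rw [max_eq_right hle] at hpos ⊢
          have ih := pow_height_le_W hc r hpos
          have h1 : c ^ r.height = c ^ (r.height - 1) * c := by
            rw [← pow_succ, Nat.sub_add_cancel hpos]
          rw [h1]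
          have h2 : c ^ (r.height - 1) * c ≤ W c r * c :=
            mul_le_mul_of_nonneg_right ih hc0
          nlinarith [mul_nonneg hc0 hl]

def bld (l : List ℕ) : BTree := l.foldl (fun T x => T.insert x) .leaf

lemma foldl_insert_node (a : ℕ) : ∀ (l : List ℕ) (L R : BTree),
    l.foldl (fun T x => T.insert x) (.node L a R)
      = BTree.node ((l.filter fun x => decide (x < a)).foldl (fun T x => T.insert x) L) a
          ((l.filter fun x => !decide (x < a)).foldl (fun T x => T.insert x) R)
  | [], L, R => rfl
  | x :: l, L, R => by
      by_cases h : x < a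
      · simp only [List.foldl_cons, BTree.insert, if_pos h, List.filter_cons, h, decide_true,
          Bool.not_true, if_true]
        simpa using foldl_insert_node a l (L.insert x) R
      · simp only [List.foldl_cons, BTree.insert, if_neg h, List.filter_cons, h, decide_false,
          Bool.not_false, if_false]
        simpa using foldl_insert_node a l L (R.insert x)

lemma bld_cons (a : ℕ) (l : List ℕ) :
    bld (a :: l) = BTree.node (bld (l.filter fun x => decide (x < a))) a
      (bld (l.filter fun x => !decide (x < a))) := by
  unfold bld
  simp only [List.foldl_cons]
  have : BTree.leaf.insert a = BTree.node .leaf a .leaf := rfl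
  rw [this, foldl_insert_node]


def mrg : List Bool → List ℕ → List ℕ → List ℕ
  | true :: bs, x :: q1, q2 => x :: mrg bs q1 q2
  | false :: bs, q1, y :: q2 => y :: mrg bs q1 q2
  | _, _, _ => []

lemma count_true_map (p : ℕ → Bool) : ∀ l : List ℕ,
    List.count true (l.map p) = (l.filter p).length
  | [] => rfl
  | a :: l => by
      cases h : p a <;>
        simp [List.count_cons, List.filter_cons, h, count_true_map p l]

lemma count_false_map (p : ℕ → Bool) : ∀ l : List ℕ,
    List.count false (l.map p) = (l.filter fun x => !p x).length
  | [] => rfl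
  | a :: l => by
      cases h : p a <;>
        simp [List.count_cons, List.filter_cons, h, count_false_map p l]

lemma mrg_spec (p : ℕ → Bool) : ∀ (bs : List Bool) (q1 q2 : List ℕ),
    List.count true bs = q1.length → List.count false bs = q2.length →
    (∀ x ∈ q1, p x = true) → (∀ y ∈ q2, p y = false) →
    (mrg bs q1 q2).filter p = q1 ∧ (mrg bs q1 q2).filter (fun x => !p x) = q2 ∧
      (mrg bs q1 q2).map p = bs ∧ (mrg bs q1 q2).Perm (q1 ++ q2)
  | [], q1, q2, h1, h2, _, _ => by
      simp at h1 h2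
      have hq1 : q1 = [] := List.length_eq_zero_iff.mp h1.symm
      have hq2 : q2 = [] := List.length_eq_zero_iff.mp h2.symm
      subst hq1; subst hq2
      simp [mrg]
  | true :: bs, q1, q2, h1, h2, hq1, hq2 => by
      cases q1 with
      | nil => simp [List.count_cons] at h1
      | cons x q1 =>
        have hx : p x = true := hq1 x (by simp)
        have ih := mrg_spec p bs q1 q2 (by simpa [List.count_cons] using h1)
          (by simpa [List.count_cons] using h2)
          (fun y hy => hq1 y (by simp [hy])) hq2
        refine ⟨?_, ?_, ?_, ?_⟩
        · simp [mrg, List.filter_cons, hx, ih.1]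
        · simp [mrg, List.filter_cons, hx, ih.2.1]
        · simp [mrg, hx, ih.2.2.1]
        · have h' : mrg (true :: bs) (x :: q1) q2 = x :: mrg bs q1 q2 := by simp [mrg]
          rw [h']
          exact (ih.2.2.2.cons x)
  | false :: bs, q1, q2, h1, h2, hq1, hq2 => by
      cases q2 with
      | nil => simp [List.count_cons] at h2
      | cons y q2 =>
        have hy : p y = false := hq2 y (by simp)
        have ih := mrg_spec p bs q1 q2 (by simpa [List.count_cons] using h1)
          (by simpa [List.count_cons] using h2)
          hq1 (fun z hz => hq2 z (by simp [hz]))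
        refine ⟨?_, ?_, ?_, ?_⟩
        · simp [mrg, List.filter_cons, hy, ih.1]
        · simp [mrg, List.filter_cons, hy, ih.2.1]
        · simp [mrg, hy, ih.2.2.1]
        · have h' : mrg (false :: bs) q1 (y :: q2) = y :: mrg bs q1 q2 := by
            cases q1 <;> simp [mrg]
          rw [h']
          exact (ih.2.2.2.cons y).trans List.perm_middle.symm

lemma mrg_recover (p : ℕ → Bool) : ∀ r : List ℕ,
    mrg (r.map p) (r.filter p) (r.filter fun x => !p x) = r
  | [] => rfl
  | a :: r => by
      cases h : p a <;>
        simp [List.filter_cons, h, mrg, mrg_recover p r]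


lemma sum_filter_perm (p : ℕ → Bool) (g : List ℕ → ℝ) (l : List ℕ) :
    ∑ r ∈ l.permutations.toFinset, g (r.filter p)
      = ((l.map p).permutations.toFinset.card : ℝ)
        * (((l.filter fun x => !p x).permutations.toFinset.card : ℝ)
        * ∑ q ∈ (l.filter p).permutations.toFinset, g q) := by
  classical
  have cond : ∀ b : List Bool × List ℕ × List ℕ,
      b.1 ∈ (l.map p).permutations.toFinset →
      b.2.1 ∈ (l.filter p).permutations.toFinset →
      b.2.2 ∈ (l.filter fun x => !p x).permutations.toFinset →
      (mrg b.1 b.2.1 b.2.2).filter p = b.2.1 ∧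
        (mrg b.1 b.2.1 b.2.2).filter (fun x => !p x) = b.2.2 ∧
        (mrg b.1 b.2.1 b.2.2).map p = b.1 ∧ (mrg b.1 b.2.1 b.2.2).Perm (b.2.1 ++ b.2.2) := by
    rintro ⟨bs, q1, q2⟩ h1 h2 h3
    simp only [List.mem_toFinset, List.mem_permutations] at h1 h2 h3
    refine mrg_spec p bs q1 q2 ?_ ?_ ?_ ?_
    · rw [h1.count_eq true, count_true_map, h2.length_eq]
    · rw [h1.count_eq false, count_false_map, h3.length_eq]
    · intro x hx
      have := (h2.mem_iff.mp hx)
      exact (List.mem_filter.mp this).2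
    · intro y hy
      have := (h3.mem_iff.mp hy)
      simpa using (List.mem_filter.mp this).2
  have key : ∑ r ∈ l.permutations.toFinset, g (r.filter p)
      = ∑ b ∈ ((l.map p).permutations.toFinset ×ˢ
          ((l.filter p).permutations.toFinset ×ˢ (l.filter fun x => !p x).permutations.toFinset)),
          g b.2.1 := by
    refine Finset.sum_nbij' (i := fun r => (r.map p, (r.filter p, r.filter fun x => !p x)))
      (j := fun b => mrg b.1 b.2.1 b.2.2) ?_ ?_ ?_ ?_ ?_
    · intro r hr
      simp only [List.mem_toFinset, List.mem_permutations] at hr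
      simp only [Finset.mem_product, List.mem_toFinset, List.mem_permutations]
      exact ⟨hr.map p, hr.filter p, hr.filter _⟩
    · rintro ⟨bs, q1, q2⟩ hb
      simp only [Finset.mem_product] at hb
      obtain ⟨hperm1, hperm2, hperm3, hperm4⟩ := cond ⟨bs, q1, q2⟩ hb.1 hb.2.1 hb.2.2
      simp only [List.mem_toFinset, List.mem_permutations] at hb ⊢
      have h2 : q1.Perm (l.filter p) := hb.2.1
      have h3 : q2.Perm (l.filter fun x => !p x) := hb.2.2
      exact hperm4.trans ((h2.append h3).trans (List.filter_append_perm p l))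
    · intro r _; exact mrg_recover p r
    · rintro ⟨bs, q1, q2⟩ hb
      simp only [Finset.mem_product] at hb
      obtain ⟨hperm1, hperm2, hperm3, _⟩ := cond ⟨bs, q1, q2⟩ hb.1 hb.2.1 hb.2.2
      simp [hperm1, hperm2, hperm3]
    · intro r _; rfl
  rw [key, Finset.sum_product]
  have inner : ∀ bs : List Bool,
      ∑ y ∈ ((l.filter p).permutations.toFinset ×ˢ (l.filter fun x => !p x).permutations.toFinset),
        g y.1
      = ((l.filter fun x => !p x).permutations.toFinset.card : ℝ)
        * ∑ q ∈ (l.filter p).permutations.toFinset, g q := by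
    intro bs
    rw [Finset.sum_product]
    rw [Finset.mul_sum]
    refine Finset.sum_congr rfl (fun q1 _ => ?_)
    simp [Finset.sum_const, nsmul_eq_mul]
  rw [Finset.sum_congr rfl (fun bs _ => inner bs), Finset.sum_const, nsmul_eq_mul]


lemma card_perms {l : List ℕ} (hl : l.Nodup) :
    l.permutations.toFinset.card = l.length.factorial := by
  rw [List.toFinset_card_of_nodup (List.nodup_permutations l hl), List.length_permutations]

lemma card_identity (p : ℕ → Bool) {l : List ℕ} (hl : l.Nodup) :
    ((l.map p).permutations.toFinset.card : ℝ)
      * (((l.filter fun x => !p x).permutations.toFinset.card : ℝ)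
        * ((l.filter p).length.factorial : ℝ)) = (l.length.factorial : ℝ) := by
  have h := sum_filter_perm p (fun _ => (1:ℝ)) l
  rw [Finset.sum_const, Finset.sum_const, card_perms hl, card_perms (hl.filter p)] at h
  simp only [nsmul_eq_mul, mul_one] at h
  rw [← h]

lemma sum_by_head (l : List ℕ) (hl : l ≠ []) (f : List ℕ → ℝ) :
    ∑ r ∈ l.permutations.toFinset, f r
      = ∑ a ∈ l.toFinset, ∑ r' ∈ (l.erase a).permutations.toFinset, f (a :: r') := by
  classical
  rw [← Finset.sum_sigma (l.toFinset) (fun a => (l.erase a).permutations.toFinset)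
    (fun b => f (b.1 :: b.2))]
  refine Finset.sum_nbij' (i := fun r => (⟨r.headI, r.tail⟩ : Σ _ : ℕ, List ℕ))
    (j := fun b => b.1 :: b.2) ?_ ?_ ?_ ?_ ?_
  · intro r hr
    simp only [List.mem_toFinset, List.mem_permutations] at hr
    have hne : r ≠ [] := fun h => hl (List.length_eq_zero_iff.mp (by rw [← hr.length_eq, h]; rfl))
    obtain ⟨h, t, rfl⟩ : ∃ h t, r = h :: t := ⟨r.headI, r.tail, (List.cons_head!_tail hne ▸ by
      cases r with | nil => exact absurd rfl hne | cons a s => rfl)⟩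
    simp only [Finset.mem_sigma, List.mem_toFinset, List.mem_permutations, List.headI, List.tail]
    constructor
    · exact hr.mem_iff.mp (by simp)
    · have := hr.erase h
      rwa [List.erase_cons_head] at this
  · rintro ⟨a, r'⟩ hb
    simp only [Finset.mem_sigma, List.mem_toFinset, List.mem_permutations] at hb
    simp only [List.mem_toFinset, List.mem_permutations]
    exact (hb.2.cons a).trans (List.perm_cons_erase hb.1).symm
  · intro r hr
    simp only [List.mem_toFinset, List.mem_permutations] at hr
    have hne : r ≠ [] := fun h => hl (List.length_eq_zero_iff.mp (by rw [← hr.length_eq, h]; rfl))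
    cases r with
    | nil => exact absurd rfl hne
    | cons a s => rfl
  · rintro ⟨a, r'⟩ _; rfl
  · intro r hr
    simp only [List.mem_toFinset, List.mem_permutations] at hr
    have hne : r ≠ [] := fun h => hl (List.length_eq_zero_iff.mp (by rw [← hr.length_eq, h]; rfl))
    cases r with
    | nil => exact absurd rfl hne
    | cons a s => rfl

lemma sum_rank {l : List ℕ} (hl : l.Nodup) (ψ : ℕ → ℝ) :
    ∑ a ∈ l.toFinset, ψ ((l.filter fun x => decide (x < a)).length)
      = ∑ j ∈ Finset.range l.length, ψ j := by
  classical
  set e : ℕ → ℕ := fun a => (l.filter fun x => decide (x < a)).length with he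
  have hcard : ∀ a, e a = (l.toFinset.filter fun x => x < a).card := by
    intro a
    rw [he]
    have h1 : (l.filter fun x => decide (x < a)).toFinset
        = l.toFinset.filter fun x => x < a := by
      rw [List.toFinset_filter]; simp
    rw [← h1, List.toFinset_card_of_nodup (hl.filter _)]
  have hmono : ∀ a ∈ l.toFinset, ∀ b ∈ l.toFinset, a < b → e a < e b := by
    intro a ha b hb hab
    rw [hcard, hcard]
    have hsub : (l.toFinset.filter fun x => x < a) ⊆ (l.toFinset.filter fun x => x < b) := by
      intro x hx
      rw [Finset.mem_filter] at hx ⊢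
      exact ⟨hx.1, lt_trans hx.2 hab⟩
    refine Finset.card_lt_card ((Finset.ssubset_iff_of_subset hsub).mpr ⟨a, ?_, ?_⟩)
    · exact Finset.mem_filter.mpr ⟨ha, hab⟩
    · simp
  have hinj : Set.InjOn e l.toFinset := by
    intro a ha b hb hab
    by_contra hne
    rcases lt_or_gt_of_ne hne with h | h
    · exact absurd hab (ne_of_lt (hmono a ha b hb h))
    · exact absurd hab.symm (ne_of_lt (hmono b hb a ha h))
  have himg : l.toFinset.image e = Finset.range l.length := by
    refine Finset.eq_of_subset_of_card_le ?_ ?_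
    · intro j hj
      obtain ⟨a, ha, rfl⟩ := Finset.mem_image.mp hj
      rw [Finset.mem_range, hcard]
      calc (l.toFinset.filter fun x => x < a).card ≤ (l.toFinset.erase a).card := by
            refine Finset.card_le_card ?_
            intro x hx
            rw [Finset.mem_filter] at hx
            exact Finset.mem_erase.mpr ⟨ne_of_lt hx.2, hx.1⟩
        _ < l.toFinset.card := Finset.card_erase_lt_of_mem ha
        _ ≤ l.length := by rw [List.toFinset_card_of_nodup hl]
    · rw [Finset.card_range, Finset.card_image_of_injOn hinj,
        List.toFinset_card_of_nodup hl]
  rw [← himg, Finset.sum_image (fun a ha b hb hab => hinj ha hb hab)]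

lemma bern {k : ℝ} (hk : 2 < k) {x : ℝ} (hx : 1 ≤ x) :
    x ^ k + k * x ^ (k - 1) + 1 ≤ (x + 1) ^ k := by
  have hx0 : (0:ℝ) < x := by linarith
  have hAB : x ^ (k-2) * x = x ^ (k-1) := by
    have h := Real.rpow_add hx0 (k-2) 1
    rw [Real.rpow_one] at h
    rw [← h]
    congr 1
    ring
  have hAC : x ^ (k-1) * x = x ^ k := by
    have h := Real.rpow_add hx0 (k-1) 1
    rw [Real.rpow_one] at h
    rw [← h]
    congr 1
    ring
  have hdx : (0:ℝ) ≤ 1/x := by positivity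
  have h1 : 1 + (k-1) * (1/x) ≤ (1 + 1/x) ^ (k-1) :=
    one_add_mul_self_le_rpow_one_add (by linarith) (by linarith)
  have h2 : (x + 1) ^ (k - 1) = x ^ (k-1) * (1 + 1/x) ^ (k-1) := by
    rw [← Real.mul_rpow hx0.le (by positivity)]
    congr 1
    field_simp
  have hA0 : (0:ℝ) < x ^ (k-1) := Real.rpow_pos_of_pos hx0 _
  have h3 : x ^ (k-1) + (k-1) * x ^ (k-2) ≤ (x+1) ^ (k-1) := by
    rw [h2]
    have hmul := mul_le_mul_of_nonneg_left h1 hA0.le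
    have hBA : x ^ (k-1) / x = x ^ (k-2) := by
      rw [← hAB, mul_div_assoc, div_self hx0.ne', mul_one]
    have heq : x ^ (k-1) * (1 + (k-1)*(1/x)) = x ^ (k-1) + (k-1) * x ^ (k-2) := by
      rw [← hBA]
      ring
    linarith [heq ▸ hmul]
  have hB1 : (1:ℝ) ≤ x ^ (k-2) := Real.one_le_rpow hx (by linarith)
  have h4 : (x+1) ^ k = (x+1) * (x+1) ^ (k-1) := by
    have h := Real.rpow_add (by linarith : (0:ℝ) < x+1) 1 (k-1)
    rw [Real.rpow_one] at h
    rw [← h]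
    congr 1
    ring
  rw [h4]
  have h5 : (x+1) * (x ^ (k-1) + (k-1) * x ^ (k-2)) ≤ (x+1) * (x+1)^(k-1) :=
    mul_le_mul_of_nonneg_left h3 (by linarith)
  nlinarith [h5, hAB, hAC, hB1, hA0.le]


lemma sum_pow_le {k : ℝ} (hk : 2 < k) : ∀ m : ℕ,
    (m:ℝ) + k * ∑ j ∈ Finset.range m, (j:ℝ) ^ (k-1) ≤ (m:ℝ) ^ k := by
  intro m
  induction m with
  | zero => simp [Real.zero_rpow (by intro h; linarith : k ≠ 0)]
  | succ m ih =>
    rw [Finset.sum_range_succ]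
    rcases Nat.eq_zero_or_pos m with rfl | hm
    · simp [Real.zero_rpow (by intro h; linarith : k - 1 ≠ 0), Real.one_rpow]
    · have hm1 : (1:ℝ) ≤ (m:ℝ) := by exact_mod_cast hm
      have hb := bern hk hm1
      push_cast
      linarith

lemma W_node (c : ℝ) (L R : BTree) (a : ℕ) :
    W c (BTree.node L a R) = 1 + c * (W c L + W c R) := rfl

lemma main_bound {k : ℝ} (hk : 2 < k) : ∀ m : ℕ, ∀ l : List ℕ, l.length = m → l.Nodup →
    ∑ r ∈ l.permutations.toFinset, W (k/2) (bld r)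
      ≤ (m.factorial : ℝ) * (m:ℝ) ^ (k-1) := by
  intro m
  induction m using Nat.strong_induction_on with
  | _ m IH =>
  intro l hlen hnd
  rcases Nat.eq_zero_or_pos m with rfl | hm
  · have hl : l = [] := List.length_eq_zero_iff.mp hlen
    subst hl
    rw [List.permutations_nil]
    have : W (k/2) (bld []) = 0 := rfl
    simp [this, Real.zero_rpow (by intro h; linarith : k - 1 ≠ 0)]
  · have hl : l ≠ [] := by
      intro h; rw [h] at hlen; simp at hlen; omega
    set c := k/2 with hc
    have hc0 : (0:ℝ) ≤ c := by rw [hc]; linarith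
    rw [sum_by_head l hl]
    set φ : ℕ → ℝ := fun j => (j:ℝ) ^ (k-1) with hφ
    have step : ∀ a ∈ l.toFinset,
        ∑ r' ∈ (l.erase a).permutations.toFinset, W c (bld (a :: r'))
        ≤ ((m-1).factorial : ℝ) *
            (1 + c * (φ ((l.filter fun x => decide (x < a)).length)
              + φ (m - 1 - (l.filter fun x => decide (x < a)).length))) := by
      intro a ha
      have haml : a ∈ l := List.mem_toFinset.mp ha
      set l' := l.erase a with hl'
      have hnd' : l'.Nodup := hnd.erase a
      have hlen' : l'.length = m - 1 := by rw [hl', List.length_erase_of_mem haml, hlen]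
      set p : ℕ → Bool := fun x => decide (x < a) with hp
      have hperm : l.Perm (a :: l') := List.perm_cons_erase haml
      have hfilt : (l.filter p).Perm (l'.filter p) := by
        have h2 := hperm.filter p
        have hpa : p a = false := by simp [hp]
        rw [List.filter_cons, hpa] at h2
        simpa using h2
      set t := (l.filter p).length with ht
      have ht' : (l'.filter p).length = t := hfilt.length_eq.symm
      have ht2 : (l'.filter fun x => !p x).length = m - 1 - t := by
        have hsum : (l'.filter p).length + (l'.filter fun x => !p x).length = l'.length := by
          have h3 := (List.filter_append_perm p l').length_eq
          simpa [List.length_append] using h3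
        omega
      have htm : t ≤ m - 1 := by
        have hfl := List.length_filter_le p l'
        omega
      have hdec : ∀ r' : List ℕ, W c (bld (a :: r'))
          = 1 + c * (W c (bld (r'.filter p)) + W c (bld (r'.filter fun x => !p x))) := by
        intro r'
        rw [bld_cons, W_node]
      have hfs1 : ∑ r' ∈ l'.permutations.toFinset, W c (bld (r'.filter p))
          ≤ ((m-1).factorial : ℝ) * φ t := by
        rw [sum_filter_perm p (fun q => W c (bld q)) l']
        have hIH : ∑ q ∈ (l'.filter p).permutations.toFinset, W c (bld q)
            ≤ (t.factorial : ℝ) * φ t := by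
          rw [hφ]
          exact IH t (by omega) (l'.filter p) ht' (hnd'.filter p)
        have hci := card_identity p hnd'
        rw [ht', hlen'] at hci
        have hWpos : (0:ℝ) ≤ ∑ q ∈ (l'.filter p).permutations.toFinset, W c (bld q) :=
          Finset.sum_nonneg fun q _ => W_nonneg hc0 _
        calc ((l'.map p).permutations.toFinset.card : ℝ)
            * (((l'.filter fun x => !p x).permutations.toFinset.card : ℝ)
              * ∑ q ∈ (l'.filter p).permutations.toFinset, W c (bld q))
            ≤ ((l'.map p).permutations.toFinset.card : ℝ)
              * (((l'.filter fun x => !p x).permutations.toFinset.card : ℝ)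
                * ((t.factorial : ℝ) * φ t)) := by
              refine mul_le_mul_of_nonneg_left ?_ (by positivity)
              exact mul_le_mul_of_nonneg_left hIH (by positivity)
          _ = (((l'.map p).permutations.toFinset.card : ℝ)
              * (((l'.filter fun x => !p x).permutations.toFinset.card : ℝ)
                * (t.factorial : ℝ))) * φ t := by ring
          _ = ((m-1).factorial : ℝ) * φ t := by rw [hci]
      have hfs2 : ∑ r' ∈ l'.permutations.toFinset, W c (bld (r'.filter fun x => !p x))
          ≤ ((m-1).factorial : ℝ) * φ (m - 1 - t) := by
        rw [sum_filter_perm (fun x => !p x) (fun q => W c (bld q)) l']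
        have hIH : ∑ q ∈ (l'.filter fun x => !p x).permutations.toFinset, W c (bld q)
            ≤ ((m-1-t).factorial : ℝ) * φ (m-1-t) := by
          rw [hφ]
          exact IH (m-1-t) (by omega) (l'.filter fun x => !p x) ht2 (hnd'.filter _)
        have hci := card_identity (fun x => !p x) hnd'
        rw [ht2, hlen'] at hci
        have hWpos : (0:ℝ) ≤ ∑ q ∈ (l'.filter fun x => !p x).permutations.toFinset, W c (bld q) :=
          Finset.sum_nonneg fun q _ => W_nonneg hc0 _
        calc ((l'.map fun x => !p x).permutations.toFinset.card : ℝ)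
            * (((l'.filter fun x => !(!p x)).permutations.toFinset.card : ℝ)
              * ∑ q ∈ (l'.filter fun x => !p x).permutations.toFinset, W c (bld q))
            ≤ ((l'.map fun x => !p x).permutations.toFinset.card : ℝ)
              * (((l'.filter fun x => !(!p x)).permutations.toFinset.card : ℝ)
                * (((m-1-t).factorial : ℝ) * φ (m-1-t))) := by
              refine mul_le_mul_of_nonneg_left ?_ (by positivity)
              exact mul_le_mul_of_nonneg_left hIH (by positivity)
          _ = (((l'.map fun x => !p x).permutations.toFinset.card : ℝ)
              * (((l'.filter fun x => !(!p x)).permutations.toFinset.card : ℝ)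
                * ((m-1-t).factorial : ℝ))) * φ (m-1-t) := by ring
          _ = ((m-1).factorial : ℝ) * φ (m-1-t) := by rw [hci]
      calc ∑ r' ∈ l'.permutations.toFinset, W c (bld (a :: r'))
          = ∑ r' ∈ l'.permutations.toFinset,
              (1 + c * (W c (bld (r'.filter p)) + W c (bld (r'.filter fun x => !p x)))) :=
            Finset.sum_congr rfl (fun r' _ => hdec r')
        _ = (l'.permutations.toFinset.card : ℝ)
            + c * ((∑ r' ∈ l'.permutations.toFinset, W c (bld (r'.filter p)))
              + ∑ r' ∈ l'.permutations.toFinset, W c (bld (r'.filter fun x => !p x))) := by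
            rw [Finset.sum_add_distrib, Finset.sum_const, nsmul_eq_mul, mul_one,
              ← Finset.mul_sum, Finset.sum_add_distrib]
        _ ≤ ((m-1).factorial : ℝ)
            + c * (((m-1).factorial : ℝ) * φ t + ((m-1).factorial : ℝ) * φ (m-1-t)) := by
            rw [card_perms hnd', hlen']
            have := add_le_add hfs1 hfs2
            nlinarith [mul_le_mul_of_nonneg_left this hc0]
        _ = ((m-1).factorial : ℝ) * (1 + c * (φ t + φ (m-1-t))) := by ring
    calc ∑ a ∈ l.toFinset, ∑ r' ∈ (l.erase a).permutations.toFinset, W c (bld (a :: r'))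
        ≤ ∑ a ∈ l.toFinset, ((m-1).factorial : ℝ) *
            (1 + c * (φ ((l.filter fun x => decide (x < a)).length)
              + φ (m - 1 - (l.filter fun x => decide (x < a)).length))) :=
          Finset.sum_le_sum step
      _ = ((m-1).factorial : ℝ) * ((l.toFinset.card : ℝ)
            + c * ((∑ a ∈ l.toFinset, φ ((l.filter fun x => decide (x < a)).length))
              + ∑ a ∈ l.toFinset, φ (m - 1 - (l.filter fun x => decide (x < a)).length))) := by
          rw [← Finset.mul_sum]
          congr 1
          rw [Finset.sum_add_distrib, Finset.sum_const, nsmul_eq_mul, mul_one,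
            ← Finset.mul_sum, Finset.sum_add_distrib]
      _ = ((m-1).factorial : ℝ) * ((m:ℝ) + c * (2 * ∑ j ∈ Finset.range m, φ j)) := by
          rw [sum_rank hnd φ, sum_rank hnd (fun j => φ (m - 1 - j)),
            List.toFinset_card_of_nodup hnd, hlen]
          have hrefl : ∑ j ∈ Finset.range m, φ (m - 1 - j) = ∑ j ∈ Finset.range m, φ j :=
            Finset.sum_range_reflect φ m
          rw [hrefl]
          ring
      _ ≤ ((m-1).factorial : ℝ) * (m:ℝ) ^ k := by
          have hs := sum_pow_le hk m
          have h2c : c * 2 = k := by rw [hc]; ring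
          have : (m:ℝ) + c * (2 * ∑ j ∈ Finset.range m, φ j)
              = (m:ℝ) + k * ∑ j ∈ Finset.range m, φ j := by
            rw [← h2c]; ring
          rw [this]
          have hfpos : (0:ℝ) ≤ ((m-1).factorial : ℝ) := by positivity
          exact mul_le_mul_of_nonneg_left hs hfpos
      _ = (m.factorial : ℝ) * (m:ℝ) ^ (k-1) := by
          have hmk : (m:ℝ) ^ k = (m:ℝ) * (m:ℝ) ^ (k-1) := by
            have h := Real.rpow_add (by exact_mod_cast hm : (0:ℝ) < m) 1 (k-1)
            rw [Real.rpow_one] at h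
            rw [← h]
            congr 1
            ring
          rw [hmk]
          have : ((m-1).factorial : ℝ) * (m:ℝ) = (m.factorial : ℝ) := by
            rw [← Nat.mul_factorial_pred hm.ne']
            push_cast
            ring
          rw [← this]
          ring


end Dev17

open Dev17 in
/-- Devroye's tail bound: the height `H_n` (maximum node depth, in edges) of a BST built
from a uniformly random permutation of `n` keys satisfies
`ℙ(H_n ≥ k ln n) ≤ (1/n) (2e/k)^(k ln n)` for every real `k > 2`. -/
theorem stmt_17 (n : ℕ) (hn : 1 ≤ n) (k : ℝ) (hk : 2 < k) :
    ((Finset.univ.filter (fun π : Equiv.Perm (Fin n) =>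
        k * Real.log n ≤ ((buildBST n π).height : ℝ) - 1)).card : ℝ) / (n.factorial : ℝ)
      ≤ (1 / n) * (2 * Real.exp 1 / k) ^ (k * Real.log n) := by
  classical
  have hn0 : (0:ℝ) < n := by exact_mod_cast hn
  set c : ℝ := k/2 with hc
  have hc1 : (1:ℝ) < c := by rw [hc]; linarith
  have hc0 : (0:ℝ) ≤ c := by linarith
  set x : ℝ := k * Real.log n with hxdef
  have hx0 : 0 ≤ x := mul_nonneg (by linarith) (Real.log_nonneg (by exact_mod_cast hn))
  set S := Finset.univ.filter (fun π : Equiv.Perm (Fin n) =>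
      k * Real.log n ≤ ((buildBST n π).height : ℝ) - 1) with hS
  have hbuild : ∀ π : Equiv.Perm (Fin n),
      buildBST n π = bld ((List.finRange n).map fun i => ((π i : Fin n) : ℕ)) := by
    intro π
    unfold buildBST bld
    rw [List.foldl_map]
  have hsum : ∑ π : Equiv.Perm (Fin n), W c (buildBST n π)
      ≤ (n.factorial : ℝ) * (n:ℝ) ^ (k-1) := by
    set f : Equiv.Perm (Fin n) → List ℕ :=
      (fun π => (List.finRange n).map fun i => ((π i : Fin n) : ℕ)) with hf
    have hflen : ∀ π, (f π).length = n := by intro π; simp [hf]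
    have hget : ∀ (π : Equiv.Perm (Fin n)) (i : Fin n), (f π).getD i.val 0 = (π i).val := by
      intro π i
      have hi : i.val < (f π).length := by rw [hflen]; exact i.isLt
      rw [List.getD_eq_getElem _ _ hi]
      simp [hf]
    have hinj : ∀ π₁ π₂ : Equiv.Perm (Fin n), f π₁ = f π₂ → π₁ = π₂ := by
      intro π₁ π₂ h
      ext i
      have h1 := hget π₁ i
      have h2 := hget π₂ i
      rw [h] at h1
      exact h1.symm.trans h2
    have hmem : ∀ π : Equiv.Perm (Fin n), f π ∈ (List.range n).permutations.toFinset := by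
      intro π
      rw [List.mem_toFinset, List.mem_permutations]
      have hnd : (f π).Nodup := by
        rw [hf]
        exact (List.nodup_finRange n).map (Fin.val_injective.comp π.injective)
      refine List.perm_of_nodup_nodup_toFinset_eq hnd (List.nodup_range) ?_
      ext y
      simp only [List.mem_toFinset, List.mem_range, hf, List.mem_map, List.mem_finRange,
        true_and]
      constructor
      · rintro ⟨i, rfl⟩; exact (π i).isLt
      · intro hy; exact ⟨π.symm ⟨y, hy⟩, by simp⟩
    calc ∑ π : Equiv.Perm (Fin n), W c (buildBST n π)
        = ∑ π : Equiv.Perm (Fin n), W c (bld (f π)) :=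
          Finset.sum_congr rfl fun π _ => by rw [hbuild, hf]
      _ = ∑ r ∈ Finset.univ.image f, W c (bld r) :=
          (Finset.sum_image (f := fun r => W c (bld r)) (g := f) (s := Finset.univ)
            (fun x _ y _ h => hinj x y h)).symm
      _ ≤ ∑ r ∈ (List.range n).permutations.toFinset, W c (bld r) := by
          refine Finset.sum_le_sum_of_subset_of_nonneg ?_ (fun r _ _ => W_nonneg hc0 _)
          intro r hr
          obtain ⟨π, _, rfl⟩ := Finset.mem_image.mp hr
          exact hmem π
      _ ≤ (n.factorial : ℝ) * (n:ℝ) ^ (k-1) := by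
          have h := main_bound hk n (List.range n) (List.length_range) (List.nodup_range)
          rw [← hc] at h
          exact h
  have hev : (S.card : ℝ) * c ^ x ≤ ∑ π : Equiv.Perm (Fin n), W c (buildBST n π) := by
    have hterm : ∀ π ∈ S, c ^ x ≤ W c (buildBST n π) := by
      intro π hπ
      have hh : k * Real.log n ≤ ((buildBST n π).height : ℝ) - 1 := (Finset.mem_filter.mp hπ).2
      have hge1 : 1 ≤ (buildBST n π).height := by
        rcases Nat.eq_zero_or_pos (buildBST n π).height with h0 | h
        · rw [h0] at hh; norm_num at hh; rw [← hxdef] at hh; linarith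
        · exact h
      have hcast : (((buildBST n π).height - 1 : ℕ) : ℝ) = ((buildBST n π).height : ℝ) - 1 := by
        push_cast [hge1]
        ring
      have hrle : c ^ x ≤ c ^ ((((buildBST n π).height - 1 : ℕ)) : ℝ) := by
        rw [Real.rpow_le_rpow_left_iff hc1, hcast]
        rw [hxdef]
        exact hh
      rw [Real.rpow_natCast] at hrle
      exact hrle.trans (pow_height_le_W hc1.le _ hge1)
    calc (S.card : ℝ) * c ^ x = ∑ _π ∈ S, c ^ x := by rw [Finset.sum_const, nsmul_eq_mul]
      _ ≤ ∑ π ∈ S, W c (buildBST n π) := Finset.sum_le_sum hterm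
      _ ≤ ∑ π : Equiv.Perm (Fin n), W c (buildBST n π) :=
          Finset.sum_le_sum_of_subset_of_nonneg (Finset.filter_subset _ _)
            (fun π _ _ => W_nonneg hc0 _)
  have hfin : (0:ℝ) < (n.factorial : ℝ) := by exact_mod_cast n.factorial_pos
  have hcx : (0:ℝ) < c ^ x := Real.rpow_pos_of_pos (by linarith) x
  have hdiv : (S.card : ℝ) / (n.factorial : ℝ) ≤ (n:ℝ) ^ (k-1) / c ^ x := by
    rw [div_le_div_iff₀ hfin hcx]
    calc (S.card:ℝ) * c ^ x ≤ (n.factorial : ℝ) * (n:ℝ)^(k-1) := le_trans hev hsum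
      _ = (n:ℝ)^(k-1) * (n.factorial:ℝ) := by ring
  refine le_trans hdiv (le_of_eq ?_)
  have h2ek : 2 * Real.exp 1 / k = Real.exp 1 / c := by
    rw [hc]
    field_simp
  rw [h2ek]
  have hek : (Real.exp 1 / c) ^ x = Real.exp x / c ^ x := by
    rw [Real.div_rpow (Real.exp_pos 1).le (by linarith), Real.exp_one_rpow]
  rw [hek]
  have hnk : (n:ℝ) ^ k = Real.exp x := by
    rw [Real.rpow_def_of_pos hn0, hxdef, mul_comm]
  have hnk1 : (n:ℝ) ^ (k-1) = (n:ℝ) ^ k / n := by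
    rw [Real.rpow_sub hn0, Real.rpow_one]
  rw [hnk1, hnk]
  field_simp
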